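/- arXiv:2203.02543 — 2 statements merged into one kernel-verified Lean document; each statement's English description precedes it below -/
import Mathlib

section
/- Let d ≥ 2 and 0 < ε. Define the anisotropic Gaussian probability density g_ε(x) = ε^{d−2} (2π)^{−d/2} exp(−(x₁²/ε² + ε²(x₂² + ⋯ + x_d²))/2) on ℝ^d. Then for every unit vector ξ ∈ ℝ^d and every t ∈ ℝ, the Radon transform of g_ε is R g_ε(t, ξ) = (2π σ_ε²(ξ))^{−1/2} exp(−t²/(2 σ_ε²(ξ))), where σ_ε²(ξ) = ε² ξ₁² + (1 − ξ₁²)/ε²; i.e., each slice is a normalized one-dimensional Gaussian whose variance σ_ε²(ξ) depends on the direction ξ. -/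
open MeasureTheory Real Filter
open scoped RealInnerProductSpace Topology

/-- The Radon transform of `f : ℝ^d → ℝ` at offset `t` and direction `ξ`, computed using a
linear isometry `T : ℝ^{d-1} → ℝ^d` that parametrizes the hyperplane through `t • ξ`
orthogonal to `ξ`: the integral of `f` over that hyperplane with respect to the pushforward
of the `(d-1)`-dimensional Lebesgue measure under `T`. -/
noncomputable def radon {d : ℕ} (f : EuclideanSpace ℝ (Fin d) → ℝ) (t : ℝ)
    (ξ : EuclideanSpace ℝ (Fin d))
    (T : EuclideanSpace ℝ (Fin (d - 1)) →ₗᵢ[ℝ] EuclideanSpace ℝ (Fin d)) : ℝ :=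
  ∫ y, f (t • ξ + T y)

/-- `T` is a valid parametrization of the hyperplane `ξ^⊥`: its range is the orthogonal
complement of the line `ℝ ∙ ξ`. -/
def IsRadonParam {d : ℕ} (ξ : EuclideanSpace ℝ (Fin d))
    (T : EuclideanSpace ℝ (Fin (d - 1)) →ₗᵢ[ℝ] EuclideanSpace ℝ (Fin d)) : Prop :=
  LinearMap.range T.toLinearMap = (ℝ ∙ ξ)ᗮ

lemma gauss_shift (b m : ℝ) :
    ∫ y : ℝ, Real.exp (-b * (y + m) ^ 2) = Real.sqrt (π / b) := by
  rw [integral_add_right_eq_self (fun z : ℝ => Real.exp (-b * z ^ 2)) m, integral_gaussian]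

set_option maxHeartbeats 1000000 in
/-- Eqs. (4.5)–(4.8): the Radon transform of the anisotropic Gaussian
`g_ε(x) = ε^{d-2} (2π)^{-d/2} exp(-(x₁²/ε² + ε²(x₂²+⋯+x_d²))/2)` is, in each direction `ξ`,
the normalized 1D Gaussian of variance `σ_ε²(ξ) = ε²ξ₁² + (1-ξ₁²)/ε²`. -/
theorem statement7 (d : ℕ) (hd : 2 ≤ d) (ε : ℝ) (hε : 0 < ε)
    (ξ : EuclideanSpace ℝ (Fin d)) (hξ : ‖ξ‖ = 1)
    (T : EuclideanSpace ℝ (Fin (d - 1)) →ₗᵢ[ℝ] EuclideanSpace ℝ (Fin d))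
    (hT : IsRadonParam ξ T) (t : ℝ) :
    radon (fun x => ε ^ (d - 2) * (2 * π) ^ (-(d : ℝ) / 2) *
        Real.exp (-((x (⟨0, by omega⟩ : Fin d)) ^ 2 / ε ^ 2 +
          ε ^ 2 * ∑ i ∈ Finset.univ.filter (fun i : Fin d => i ≠ ⟨0, by omega⟩),
            (x i) ^ 2) / 2)) t ξ T =
      (2 * π * (ε ^ 2 * (ξ (⟨0, by omega⟩ : Fin d)) ^ 2 +
          (1 - (ξ (⟨0, by omega⟩ : Fin d)) ^ 2) / ε ^ 2)) ^ (-(1 : ℝ) / 2) *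
        Real.exp (-t ^ 2 / (2 * (ε ^ 2 * (ξ (⟨0, by omega⟩ : Fin d)) ^ 2 +
          (1 - (ξ (⟨0, by omega⟩ : Fin d)) ^ 2) / ε ^ 2))) := by
  have h0d : 0 < d := by omega
  have h0d1 : 0 < d - 1 := by omega
  have hεne : ε ≠ 0 := hε.ne'
  set i0 : Fin d := ⟨0, h0d⟩ with hi0def
  set j0 : Fin (d - 1) := ⟨0, h0d1⟩ with hj0def
  show radon (fun x => ε ^ (d - 2) * (2 * π) ^ (-(d : ℝ) / 2) *
        Real.exp (-((x i0) ^ 2 / ε ^ 2 +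
          ε ^ 2 * ∑ i ∈ Finset.univ.filter (fun i : Fin d => i ≠ i0),
            (x i) ^ 2) / 2)) t ξ T =
      (2 * π * (ε ^ 2 * (ξ i0) ^ 2 + (1 - (ξ i0) ^ 2) / ε ^ 2)) ^ (-(1 : ℝ) / 2) *
        Real.exp (-t ^ 2 / (2 * (ε ^ 2 * (ξ i0) ^ 2 + (1 - (ξ i0) ^ 2) / ε ^ 2)))
  set ξ1 : ℝ := ξ i0 with hξ1def
  set s2 : ℝ := ε ^ 2 * ξ1 ^ 2 + (1 - ξ1 ^ 2) / ε ^ 2 with hs2def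
  set l : ℝ := 1 / ε ^ 2 - ε ^ 2 with hldef
  have hnormsq : ∀ {n : ℕ} (z : EuclideanSpace ℝ (Fin n)), ‖z‖ ^ 2 = ∑ i, (z i) ^ 2 := by
    intro n z
    rw [EuclideanSpace.norm_eq, Real.sq_sqrt (by positivity)]
    simp [sq_abs]
  have hsum1 : ∑ i, (ξ i) ^ 2 = 1 := by rw [← hnormsq, hξ, one_pow]
  have hξ1sq : ξ1 ^ 2 ≤ 1 := by
    rw [← hsum1]
    exact Finset.single_le_sum (fun i _ => sq_nonneg (ξ i)) (Finset.mem_univ i0)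
  have hs2pos : 0 < s2 := by
    rcases eq_or_ne ξ1 0 with h | h
    · rw [hs2def, h]
      norm_num
      positivity
    · have h1 : 0 < ε ^ 2 * ξ1 ^ 2 := by positivity
      have h2 : 0 ≤ (1 - ξ1 ^ 2) / ε ^ 2 := div_nonneg (by nlinarith) (sq_nonneg ε)
      rw [hs2def]; linarith
  have hs2ne : s2 ≠ 0 := hs2pos.ne'
  have hT' : LinearMap.range T.toLinearMap = (ℝ ∙ ξ)ᗮ := hT
  have horth : ∀ y, ⟪ξ, T y⟫ = 0 := by
    intro y
    have hy : T y ∈ (ℝ ∙ ξ)ᗮ := by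
      rw [← hT']; exact LinearMap.mem_range.mpr ⟨y, rfl⟩
    exact Submodule.mem_orthogonal_singleton_iff_inner_right.mp hy
  set e1 : EuclideanSpace ℝ (Fin d) := EuclideanSpace.single i0 (1 : ℝ) with he1def
  set w : EuclideanSpace ℝ (Fin (d - 1)) := LinearMap.adjoint T.toLinearMap e1 with hwdef
  have hTw : ∀ y, (T y) i0 = ⟪y, w⟫ := by
    intro y
    rw [hwdef, LinearMap.adjoint_inner_right]
    show (T y) i0 = ⟪T y, e1⟫
    rw [he1def, EuclideanSpace.inner_single_right]
    simp
  have hwnorm : ‖w‖ ^ 2 = 1 - ξ1 ^ 2 := by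
    have hmem : e1 - ξ1 • ξ ∈ LinearMap.range T.toLinearMap := by
      rw [hT', Submodule.mem_orthogonal_singleton_iff_inner_right, inner_sub_right,
        inner_smul_right, he1def, EuclideanSpace.inner_single_right,
        real_inner_self_eq_norm_sq, hξ]
      simp [hξ1def]
    obtain ⟨u, hu⟩ := hmem
    have hwu : w = u := by
      refine ext_inner_left ℝ fun y => ?_
      rw [hwdef, LinearMap.adjoint_inner_right]
      show ⟪T y, e1⟫ = ⟪y, u⟫
      have he1split : e1 = (e1 - ξ1 • ξ) + ξ1 • ξ := by abel
      rw [he1split, inner_add_right, inner_smul_right, ← hu]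
      have hz : ⟪T y, ξ⟫ = 0 := by rw [real_inner_comm]; exact horth y
      rw [hz]
      show ⟪T y, T u⟫ + ξ1 * 0 = ⟪y, u⟫
      rw [T.inner_map_map]; ring
    have hTnorm : ‖w‖ = ‖e1 - ξ1 • ξ‖ := by
      rw [hwu, ← hu]
      exact (T.norm_map u).symm
    have h1 : ⟪e1, ξ1 • ξ⟫ = ξ1 * ξ1 := by
      rw [inner_smul_right, he1def, EuclideanSpace.inner_single_left]
      simp [hξ1def]
    have h2 : ‖ξ1 • ξ‖ = |ξ1| := by
      rw [norm_smul, hξ, mul_one, Real.norm_eq_abs]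
    rw [hTnorm, norm_sub_sq_real, h1, h2, he1def, EuclideanSpace.norm_single, sq_abs,
      norm_one]
    ring
  -- the reflection
  set c : ℝ := ‖w‖ with hcdef
  have hc0 : 0 ≤ c := norm_nonneg w
  have hcsq : c ^ 2 = 1 - ξ1 ^ 2 := hwnorm
  have hs2c : s2 = ε ^ 2 + l * c ^ 2 := by
    rw [hcsq, hldef, hs2def]; field_simp; ring
  set v : EuclideanSpace ℝ (Fin (d - 1)) := EuclideanSpace.single j0 c with hvdef
  have hvn : ‖w‖ = ‖v‖ := by
    rw [hvdef, EuclideanSpace.norm_single, Real.norm_eq_abs, abs_of_nonneg hc0, hcdef]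
  set Φ := Submodule.reflection (ℝ ∙ (w - v))ᗮ with hΦdef
  have hΦw : Φ w = v := Submodule.reflection_sub hvn
  have hΦinner : ∀ y, ⟪Φ y, w⟫ = c * y j0 := by
    intro y
    have h1 : Φ (Φ w) = w := Submodule.reflection_reflection _ w
    calc ⟪Φ y, w⟫ = ⟪Φ y, Φ (Φ w)⟫ := by rw [h1]
      _ = ⟪y, Φ w⟫ := LinearIsometryEquiv.inner_map_map _ _ _
      _ = c * y j0 := by rw [hΦw, hvdef, EuclideanSpace.inner_single_right]; simp
  -- constants
  set C : ℝ := ε ^ (d - 2) * (2 * π) ^ (-(d : ℝ) / 2) with hCdef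
  set a : ℝ := t * ξ1 with hadef
  set m : ℝ := l * a * c / s2 with hmdef
  -- step 1 : rewrite the integrand
  have hxnorm : ∀ y : EuclideanSpace ℝ (Fin (d - 1)), ‖t • ξ + T y‖ ^ 2 = t ^ 2 + ‖y‖ ^ 2 := by
    intro y
    rw [norm_add_sq_real, real_inner_smul_left, horth y, norm_smul, T.norm_map, hξ,
      Real.norm_eq_abs, mul_one, sq_abs]
    ring
  have hpoint : ∀ y : EuclideanSpace ℝ (Fin (d - 1)),
      ((t • ξ + T y) i0) ^ 2 / ε ^ 2 +
        ε ^ 2 * ∑ i ∈ Finset.univ.filter (fun i : Fin d => i ≠ i0), ((t • ξ + T y) i) ^ 2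
      = ε ^ 2 * (t ^ 2 + ‖y‖ ^ 2) + l * (a + ⟪y, w⟫) ^ 2 := by
    intro y
    have hx0 : (t • ξ + T y) i0 = a + ⟪y, w⟫ := by
      have h : (t • ξ + T y) i0 = t * ξ i0 + (T y) i0 := rfl
      rw [h, hTw y, hadef]
    have hxs : ∑ i ∈ Finset.univ.filter (fun i : Fin d => i ≠ i0), ((t • ξ + T y) i) ^ 2
        = (t ^ 2 + ‖y‖ ^ 2) - (a + ⟪y, w⟫) ^ 2 := by
      rw [Finset.filter_ne', Finset.sum_erase_eq_sub (Finset.mem_univ i0), hx0, ← hnormsq,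
        hxnorm y]
    rw [hx0, hxs, hldef]
    field_simp
    ring
  have step1 : radon (fun x => C *
        Real.exp (-((x i0) ^ 2 / ε ^ 2 +
          ε ^ 2 * ∑ i ∈ Finset.univ.filter (fun i : Fin d => i ≠ i0),
            (x i) ^ 2) / 2)) t ξ T
      = C * ∫ y : EuclideanSpace ℝ (Fin (d - 1)),
          Real.exp (-(ε ^ 2 * (t ^ 2 + ‖y‖ ^ 2) + l * (a + ⟪y, w⟫) ^ 2) / 2) := by
    rw [radon, MeasureTheory.integral_const_mul]
    congr 1
    refine integral_congr_ae (Filter.Eventually.of_forall fun y => ?_)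
    simp only []
    rw [hpoint y]
  -- step 2 : reflection change of variables
  have step2 : (∫ y : EuclideanSpace ℝ (Fin (d - 1)),
        Real.exp (-(ε ^ 2 * (t ^ 2 + ‖y‖ ^ 2) + l * (a + ⟪y, w⟫) ^ 2) / 2))
      = ∫ y : EuclideanSpace ℝ (Fin (d - 1)),
        Real.exp (-(ε ^ 2 * (t ^ 2 + ‖y‖ ^ 2) + l * (a + c * y j0) ^ 2) / 2) := by
    rw [← (Φ.measurePreserving).integral_comp Φ.toHomeomorph.measurableEmbedding
      (fun y => Real.exp (-(ε ^ 2 * (t ^ 2 + ‖y‖ ^ 2) + l * (a + ⟪y, w⟫) ^ 2) / 2))]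
    congr 1
    funext y
    rw [Φ.norm_map, hΦinner y]
  -- step 3 : to the pi measure
  have step3 : (∫ y : EuclideanSpace ℝ (Fin (d - 1)),
        Real.exp (-(ε ^ 2 * (t ^ 2 + ‖y‖ ^ 2) + l * (a + c * y j0) ^ 2) / 2))
      = ∫ x : Fin (d - 1) → ℝ,
        Real.exp (-(ε ^ 2 * (t ^ 2 + ∑ i, (x i) ^ 2) + l * (a + c * x j0) ^ 2) / 2) := by
    rw [← ((EuclideanSpace.volume_preserving_symm_measurableEquiv_toLp (Fin (d - 1))).symm).integral_comp
      (MeasurableEquiv.measurableEmbedding _)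
      (fun y : EuclideanSpace ℝ (Fin (d - 1)) =>
        Real.exp (-(ε ^ 2 * (t ^ 2 + ‖y‖ ^ 2) + l * (a + c * y j0) ^ 2) / 2))]
    refine integral_congr_ae (Filter.Eventually.of_forall fun x => ?_)
    have h1 : ∀ i, ((MeasurableEquiv.toLp 2 (Fin (d - 1) → ℝ)).symm.symm x) i = x i :=
      fun i => rfl
    have h2 : ‖(MeasurableEquiv.toLp 2 (Fin (d - 1) → ℝ)).symm.symm x‖ ^ 2 = ∑ i, (x i) ^ 2 := by
      rw [hnormsq]
      exact Finset.sum_congr rfl fun i _ => by rw [h1 i]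
    simp only []
    rw [h2, h1 j0]
  -- step 4 : factor the integrand
  set f : Fin (d - 1) → ℝ → ℝ := fun i y =>
    Real.exp (-(ε ^ 2 / 2) * y ^ 2) * (if i = j0 then Real.exp (-(l * (a + c * y) ^ 2) / 2) else 1)
    with hfdef
  have step4 : (∫ x : Fin (d - 1) → ℝ,
        Real.exp (-(ε ^ 2 * (t ^ 2 + ∑ i, (x i) ^ 2) + l * (a + c * x j0) ^ 2) / 2))
      = Real.exp (-(ε ^ 2 * t ^ 2) / 2) * ∏ i, ∫ z : ℝ, f i z := by
    rw [← MeasureTheory.integral_fintype_prod_eq_prod (ι := Fin (d - 1)) f (μ := fun _ => volume),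
      ← MeasureTheory.integral_const_mul]
    refine integral_congr_ae (Filter.Eventually.of_forall fun x => ?_)
    simp only [hfdef]
    rw [Finset.prod_mul_distrib, Finset.prod_ite_eq' Finset.univ j0
      (fun i => Real.exp (-(l * (a + c * x i) ^ 2) / 2)), if_pos (Finset.mem_univ j0),
      ← Real.exp_sum]
    rw [← Real.exp_add, ← Real.exp_add]
    congr 1
    rw [show ∑ i, -(ε ^ 2 / 2) * x i ^ 2 = -(ε ^ 2 / 2) * ∑ i, x i ^ 2 from by
      rw [Finset.mul_sum]]
    ring
  -- step 5 : the gaussian integrals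
  have hint_ne : ∀ i : Fin (d - 1), i ≠ j0 → (∫ z : ℝ, f i z) = Real.sqrt (π / (ε ^ 2 / 2)) := by
    intro i hi
    simp only [hfdef, if_neg hi, mul_one]
    exact integral_gaussian _
  have hs2cne : ε ^ 2 + l * c ^ 2 ≠ 0 := by rw [← hs2c]; exact hs2ne
  have hj0int : (∫ z : ℝ, f j0 z)
      = Real.exp (-(l * a ^ 2 * ε ^ 2 / s2) / 2) * Real.sqrt (π / (s2 / 2)) := by
    have key : ∀ z : ℝ, f j0 z
        = Real.exp (-(l * a ^ 2 * ε ^ 2 / s2) / 2) * Real.exp (-(s2 / 2) * (z + m) ^ 2) := by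
      intro z
      simp only [hfdef, eq_self_iff_true, if_true]
      rw [← Real.exp_add, ← Real.exp_add]
      congr 1
      rw [hmdef, hs2c]
      field_simp
      ring
    simp_rw [key]
    rw [MeasureTheory.integral_const_mul, gauss_shift (s2 / 2) m]
  have hprod : (∏ i, ∫ z : ℝ, f i z)
      = Real.exp (-(l * a ^ 2 * ε ^ 2 / s2) / 2) * Real.sqrt (π / (s2 / 2)) *
        Real.sqrt (π / (ε ^ 2 / 2)) ^ (d - 2) := by
    rw [← Finset.mul_prod_erase Finset.univ _ (Finset.mem_univ j0), hj0int]
    rw [Finset.prod_congr rfl (fun i hi => hint_ne i (Finset.ne_of_mem_erase hi)),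
      Finset.prod_const, Finset.card_erase_of_mem (Finset.mem_univ j0), Finset.card_univ,
      Fintype.card_fin]
    rw [show d - 1 - 1 = d - 2 from by omega, mul_assoc]
  -- put everything together
  rw [step1, step2, step3, step4, hprod]
  -- final algebra
  have hexp : Real.exp (-(ε ^ 2 * t ^ 2) / 2) * Real.exp (-(l * a ^ 2 * ε ^ 2 / s2) / 2)
      = Real.exp (-t ^ 2 / (2 * s2)) := by
    have hkey : ε ^ 2 * s2 + l * ξ1 ^ 2 * ε ^ 2 = 1 := by
      rw [hs2def, hldef]; field_simp; ring
    rw [← Real.exp_add]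
    congr 1
    rw [hadef, mul_comm 2 s2, ← div_div]
    linear_combination (-(t ^ 2 * s2⁻¹ / 2)) * hkey + (ε ^ 2 * t ^ 2 / 2) * mul_inv_cancel₀ hs2ne
  have hP : (0:ℝ) < 2 * π := by positivity
  have h1 : Real.sqrt (π / (ε ^ 2 / 2)) = (2 * π) ^ ((1:ℝ)/2) / ε := by
    rw [show π / (ε ^ 2 / 2) = 2 * π / ε ^ 2 from by field_simp,
      Real.sqrt_div (by positivity) _, Real.sqrt_sq hε.le, Real.sqrt_eq_rpow]
  have h2 : Real.sqrt (π / (s2 / 2)) = (2 * π) ^ ((1:ℝ)/2) / Real.sqrt s2 := by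
    rw [show π / (s2 / 2) = 2 * π / s2 from by field_simp,
      Real.sqrt_div (by positivity) _, Real.sqrt_eq_rpow]
  have hpow : ((2 * π) ^ ((1:ℝ)/2)) ^ (d - 2) = (2 * π) ^ (((d:ℝ) - 2)/2) := by
    rw [← Real.rpow_natCast ((2 * π) ^ ((1:ℝ)/2)) (d - 2), ← Real.rpow_mul hP.le]
    congr 1
    rw [Nat.cast_sub hd]
    push_cast
    ring
  have hs2half : s2 ^ (-(1:ℝ)/2) = (Real.sqrt s2)⁻¹ := by
    rw [show (-(1:ℝ)/2) = -(1/2) from by norm_num, Real.rpow_neg hs2pos.le,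
      Real.sqrt_eq_rpow]
  have hconst : C * ((2 * π) ^ ((1:ℝ)/2) / Real.sqrt s2 * ((2 * π) ^ ((1:ℝ)/2) / ε) ^ (d - 2))
      = (2 * π * s2) ^ (-(1:ℝ)/2) := by
    rw [div_pow, hpow, hCdef]
    rw [Real.mul_rpow hP.le hs2pos.le, hs2half]
    rw [show ε ^ (d - 2) * (2 * π) ^ (-(d:ℝ)/2) *
        ((2 * π) ^ ((1:ℝ)/2) / Real.sqrt s2 * ((2 * π) ^ (((d:ℝ) - 2)/2) / ε ^ (d - 2)))
      = ((2 * π) ^ (-(d:ℝ)/2) * (2 * π) ^ ((1:ℝ)/2) * (2 * π) ^ (((d:ℝ) - 2)/2)) *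
        (ε ^ (d - 2) / ε ^ (d - 2)) * (Real.sqrt s2)⁻¹ from by ring]
    rw [div_self (pow_ne_zero _ hεne), mul_one, ← Real.rpow_add hP, ← Real.rpow_add hP]
    congr 1
    ring
  calc C * (Real.exp (-(ε ^ 2 * t ^ 2) / 2) *
        (Real.exp (-(l * a ^ 2 * ε ^ 2 / s2) / 2) * Real.sqrt (π / (s2 / 2)) *
          Real.sqrt (π / (ε ^ 2 / 2)) ^ (d - 2)))
      = (C * (Real.sqrt (π / (s2 / 2)) * Real.sqrt (π / (ε ^ 2 / 2)) ^ (d - 2))) *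
        (Real.exp (-(ε ^ 2 * t ^ 2) / 2) * Real.exp (-(l * a ^ 2 * ε ^ 2 / s2) / 2)) := by
        ring
    _ = (2 * π * s2) ^ (-(1:ℝ)/2) * Real.exp (-t ^ 2 / (2 * s2)) := by
        rw [hexp, h1, h2, hconst]
end

section
/- Let κ ∈ 𝓢(ℝ) be an even Schwartz function with ∫_ℝ κ(s) ds = 1. For a ∈ ℝ define h_a : ℝ → ℝ by h_a(t) = ½|t − a| − ½ ∫_ℝ κ(s) |t − s| ds + (a/2) ∫_ℝ κ(s) sign(t − s) ds. Then: (i) each h_a is continuous on ℝ; (ii) h_a(t) → 0 as t → +∞ and as t → −∞; and (iii) there is a constant C, depending only on κ, such that sup_{t∈ℝ} |h_a(t)| ≤ C (1 + |a|) for every a ∈ ℝ. -/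
open MeasureTheory Filter
open scoped Topology

/-- The corrected kernel profile of Eq. (6.13) of the paper (with `a = ξᵀx`):
`h_a(t) = ½|t-a| - ½∫κ(s)|t-s|ds + (a/2)∫κ(s) sign(t-s) ds`. -/
noncomputable def hker (κ : ℝ → ℝ) (a t : ℝ) : ℝ :=
  (1 / 2) * |t - a| - (1 / 2) * (∫ s : ℝ, κ s * |t - s|) +
    (a / 2) * ∫ s : ℝ, κ s * Real.sign (t - s)

lemma measurable_realSign : Measurable Real.sign := by
  have h : Real.sign = fun x : ℝ => if x < 0 then (-1:ℝ) else if 0 < x then 1 else 0 := by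
    funext x; rfl
  rw [h]
  exact Measurable.ite measurableSet_Iio measurable_const
    (Measurable.ite measurableSet_Ioi measurable_const measurable_const)

lemma abs_realSign_le (x : ℝ) : |Real.sign x| ≤ 1 := by
  rcases lt_trichotomy x 0 with h | h | h
  · rw [Real.sign_of_neg h]; norm_num
  · simp [h, Real.sign_zero]
  · rw [Real.sign_of_pos h]; norm_num

/-- Section 6.2: for an even Schwartz function `κ` of total integral 1, the
corrected kernel profile `h_a` is continuous, vanishes at `±∞`, and is uniformly bounded by
`C(1+|a|)` with `C` depending only on `κ`. -/
theorem statement15 (κ : SchwartzMap ℝ ℝ) (heven : ∀ s : ℝ, κ (-s) = κ s)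
    (hint : (∫ s : ℝ, κ s) = 1) :
    (∀ a : ℝ, Continuous (hker (⇑κ) a)) ∧
    (∀ a : ℝ, Tendsto (hker (⇑κ) a) atTop (𝓝 0) ∧ Tendsto (hker (⇑κ) a) atBot (𝓝 0)) ∧
    ∃ C : ℝ, ∀ a t : ℝ, |hker (⇑κ) a t| ≤ C * (1 + |a|) := by
  -- basic integrability facts
  have hκint : Integrable (⇑κ) := κ.integrable
  have hκs : Integrable (fun s : ℝ => ‖κ s‖ * |s|) := by
    have := κ.integrable_pow_mul (volume : Measure ℝ) 1
    simpa [mul_comm, Real.norm_eq_abs] using this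
  have habs : ∀ t : ℝ, Integrable (fun s : ℝ => κ s * |t - s|) := by
    intro t
    refine Integrable.mono' ((hκint.norm.const_mul |t|).add hκs)
      ((κ.continuous.mul ((continuous_const.sub continuous_id).abs)).aestronglyMeasurable)
      (Eventually.of_forall fun s => ?_)
    have h1 : |t - s| ≤ |t| + |s| := (abs_sub t s)
    have h2 : (0:ℝ) ≤ ‖κ s‖ := norm_nonneg _
    simp only [norm_mul, Real.norm_eq_abs, abs_abs]
    calc |κ s| * |t - s| ≤ |κ s| * (|t| + |s|) := by
          exact mul_le_mul_of_nonneg_left h1 (abs_nonneg _)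
      _ = |t| * ‖κ s‖ + ‖κ s‖ * |s| := by simp [Real.norm_eq_abs]; ring
  have hsub : ∀ a t : ℝ, Integrable (fun s : ℝ => κ s * (|t - a| - |t - s|)) := by
    intro a t
    have : (fun s : ℝ => κ s * (|t - a| - |t - s|))
        = fun s => κ s * |t - a| - κ s * |t - s| := by funext s; ring
    rw [this]
    exact (hκint.mul_const _).sub (habs t)
  have hsgn : ∀ t : ℝ, Integrable (fun s : ℝ => κ s * Real.sign (t - s)) := by
    intro t
    refine Integrable.mono' hκint.norm
      ((κ.continuous.measurable.mul
        (measurable_realSign.comp (measurable_const.sub measurable_id))).aestronglyMeasurable)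
      (Eventually.of_forall fun s => ?_)
    simp only [norm_mul, Real.norm_eq_abs]
    calc |κ s| * |Real.sign (t - s)| ≤ |κ s| * 1 :=
          mul_le_mul_of_nonneg_left (abs_realSign_le _) (abs_nonneg _)
      _ = ‖κ s‖ := by simp [Real.norm_eq_abs]
  have hκid : Integrable (fun s : ℝ => κ s * s) := by
    refine Integrable.mono' hκs (κ.continuous.mul continuous_id).aestronglyMeasurable
      (Eventually.of_forall fun s => ?_)
    simp [Real.norm_eq_abs, abs_mul]
  -- the key rewriting using ∫κ = 1
  have hkey : ∀ a t : ℝ, hker (⇑κ) a t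
      = (1/2) * (∫ s : ℝ, κ s * (|t - a| - |t - s|))
        + (a/2) * (∫ s : ℝ, κ s * Real.sign (t - s)) := by
    intro a t
    have h1 : (∫ s : ℝ, κ s * (|t - a| - |t - s|))
        = |t - a| - ∫ s : ℝ, κ s * |t - s| := by
      have : (fun s : ℝ => κ s * (|t - a| - |t - s|))
          = fun s => κ s * |t - a| - κ s * |t - s| := by funext s; ring
      rw [this, integral_sub (hκint.mul_const _) (habs t), integral_mul_const, hint, one_mul]
    rw [hker, h1]; ring
  -- the odd moment vanishes
  have hodd : (∫ s : ℝ, κ s * s) = 0 := by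
    have h := MeasureTheory.integral_neg_eq_self (fun s : ℝ => κ s * s) (volume : Measure ℝ)
    simp only [heven, mul_neg] at h
    rw [integral_neg] at h
    linarith
  -- limits of the sign integral
  have hG_top : Tendsto (fun t : ℝ => ∫ s : ℝ, κ s * Real.sign (t - s)) atTop (𝓝 1) := by
    have h := MeasureTheory.tendsto_integral_filter_of_dominated_convergence
      (μ := (volume : Measure ℝ)) (l := atTop)
      (F := fun t s => κ s * Real.sign (t - s)) (f := fun s => κ s) (bound := fun s => ‖κ s‖)
      (Eventually.of_forall fun t => (hsgn t).aestronglyMeasurable)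
      (Eventually.of_forall fun t => Eventually.of_forall fun s => by
        simp only [norm_mul, Real.norm_eq_abs]
        calc |κ s| * |Real.sign (t - s)| ≤ |κ s| * 1 :=
              mul_le_mul_of_nonneg_left (abs_realSign_le _) (abs_nonneg _)
          _ = |κ s| := mul_one _)
      hκint.norm
      (Eventually.of_forall fun s => by
        have he : (fun t : ℝ => κ s * Real.sign (t - s)) =ᶠ[atTop] fun _ => κ s := by
          filter_upwards [eventually_gt_atTop s] with t ht
          rw [Real.sign_of_pos (by linarith), mul_one]
        exact Tendsto.congr' he.symm tendsto_const_nhds)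
    simpa [hint] using h
  have hG_bot : Tendsto (fun t : ℝ => ∫ s : ℝ, κ s * Real.sign (t - s)) atBot (𝓝 (-1)) := by
    have h := MeasureTheory.tendsto_integral_filter_of_dominated_convergence
      (μ := (volume : Measure ℝ)) (l := atBot)
      (F := fun t s => κ s * Real.sign (t - s)) (f := fun s => -κ s) (bound := fun s => ‖κ s‖)
      (Eventually.of_forall fun t => (hsgn t).aestronglyMeasurable)
      (Eventually.of_forall fun t => Eventually.of_forall fun s => by
        simp only [norm_mul, Real.norm_eq_abs]
        calc |κ s| * |Real.sign (t - s)| ≤ |κ s| * 1 :=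
              mul_le_mul_of_nonneg_left (abs_realSign_le _) (abs_nonneg _)
          _ = |κ s| := mul_one _)
      hκint.norm
      (Eventually.of_forall fun s => by
        have he : (fun t : ℝ => κ s * Real.sign (t - s)) =ᶠ[atBot] fun _ => -κ s := by
          filter_upwards [eventually_lt_atBot s] with t ht
          rw [Real.sign_of_neg (by linarith)]; ring
        exact Tendsto.congr' he.symm tendsto_const_nhds)
    rw [integral_neg, hint] at h
    exact h
  -- limits of the first integral
  have hA_top : ∀ a : ℝ, Tendsto (fun t : ℝ => ∫ s : ℝ, κ s * (|t - a| - |t - s|))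
      atTop (𝓝 (-a)) := by
    intro a
    have hbint : Integrable (fun s : ℝ => ‖κ s‖ * (|s| + |a|)) := by
      have : (fun s : ℝ => ‖κ s‖ * (|s| + |a|))
          = fun s => ‖κ s‖ * |s| + ‖κ s‖ * |a| := by funext s; ring
      rw [this]; exact hκs.add (hκint.norm.mul_const _)
    have h := MeasureTheory.tendsto_integral_filter_of_dominated_convergence
      (μ := (volume : Measure ℝ)) (l := atTop)
      (F := fun t s => κ s * (|t - a| - |t - s|)) (f := fun s => κ s * (s - a))
      (bound := fun s => ‖κ s‖ * (|s| + |a|))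
      (Eventually.of_forall fun t => (hsub a t).aestronglyMeasurable)
      (Eventually.of_forall fun t => Eventually.of_forall fun s => by
        simp only [norm_mul, Real.norm_eq_abs]
        have h1 : abs (|t - a| - |t - s|) ≤ |s - a| := by
          have := abs_abs_sub_abs_le_abs_sub (t - a) (t - s)
          simpa [show t - a - (t - s) = s - a by ring] using this
        have h2 : |s - a| ≤ |s| + |a| := abs_sub s a
        calc |κ s| * abs (|t - a| - |t - s|) ≤ |κ s| * (|s| + |a|) :=
              mul_le_mul_of_nonneg_left (h1.trans h2) (abs_nonneg _)
          _ = ‖κ s‖ * (|s| + |a|) := by simp [Real.norm_eq_abs])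
      hbint
      (Eventually.of_forall fun s => by
        have he : (fun t : ℝ => κ s * (|t - a| - |t - s|)) =ᶠ[atTop] fun _ => κ s * (s - a) := by
          filter_upwards [eventually_ge_atTop (max a s)] with t ht
          rw [abs_of_nonneg (by have := le_max_left a s; linarith),
            abs_of_nonneg (by have := le_max_right a s; linarith)]
          ring_nf
        exact Tendsto.congr' he.symm tendsto_const_nhds)
    have hval : (∫ s : ℝ, κ s * (s - a)) = -a := by
      have : (fun s : ℝ => κ s * (s - a)) = fun s => κ s * s - κ s * a := by funext s; ring
      rw [this, integral_sub hκid (hκint.mul_const _)]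
      rw [hodd, integral_mul_const, hint]; ring
    rwa [hval] at h
  have hA_bot : ∀ a : ℝ, Tendsto (fun t : ℝ => ∫ s : ℝ, κ s * (|t - a| - |t - s|))
      atBot (𝓝 a) := by
    intro a
    have hbint : Integrable (fun s : ℝ => ‖κ s‖ * (|s| + |a|)) := by
      have : (fun s : ℝ => ‖κ s‖ * (|s| + |a|))
          = fun s => ‖κ s‖ * |s| + ‖κ s‖ * |a| := by funext s; ring
      rw [this]; exact hκs.add (hκint.norm.mul_const _)
    have h := MeasureTheory.tendsto_integral_filter_of_dominated_convergence
      (μ := (volume : Measure ℝ)) (l := atBot)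
      (F := fun t s => κ s * (|t - a| - |t - s|)) (f := fun s => κ s * (a - s))
      (bound := fun s => ‖κ s‖ * (|s| + |a|))
      (Eventually.of_forall fun t => (hsub a t).aestronglyMeasurable)
      (Eventually.of_forall fun t => Eventually.of_forall fun s => by
        simp only [norm_mul, Real.norm_eq_abs]
        have h1 : abs (|t - a| - |t - s|) ≤ |s - a| := by
          have := abs_abs_sub_abs_le_abs_sub (t - a) (t - s)
          simpa [show t - a - (t - s) = s - a by ring] using this
        have h2 : |s - a| ≤ |s| + |a| := abs_sub s a
        calc |κ s| * abs (|t - a| - |t - s|) ≤ |κ s| * (|s| + |a|) :=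
              mul_le_mul_of_nonneg_left (h1.trans h2) (abs_nonneg _)
          _ = ‖κ s‖ * (|s| + |a|) := by simp [Real.norm_eq_abs])
      hbint
      (Eventually.of_forall fun s => by
        have he : (fun t : ℝ => κ s * (|t - a| - |t - s|)) =ᶠ[atBot] fun _ => κ s * (a - s) := by
          filter_upwards [eventually_le_atBot (min a s)] with t ht
          rw [abs_of_nonpos (by have := min_le_left a s; linarith),
            abs_of_nonpos (by have := min_le_right a s; linarith)]
          ring_nf
        exact Tendsto.congr' he.symm tendsto_const_nhds)
    have hval : (∫ s : ℝ, κ s * (a - s)) = a := by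
      have : (fun s : ℝ => κ s * (a - s)) = fun s => κ s * a - κ s * s := by funext s; ring
      rw [this, integral_sub (hκint.mul_const _) hκid, hodd, integral_mul_const, hint]; ring
    rwa [hval] at h
  -- continuity of the two integrals
  have hFcont : Continuous (fun t : ℝ => ∫ s : ℝ, κ s * |t - s|) := by
    have hK : (0:ℝ) ≤ ∫ s : ℝ, ‖κ s‖ := integral_nonneg fun s => norm_nonneg _
    refine LipschitzWith.continuous (K := Real.toNNReal (∫ s : ℝ, ‖κ s‖))
      (LipschitzWith.of_dist_le_mul fun t₁ t₂ => ?_)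
    rw [Real.dist_eq, Real.dist_eq, Real.coe_toNNReal _ hK]
    have hdint : Integrable (fun s : ℝ => κ s * (|t₁ - s| - |t₂ - s|)) := by
      have h : (fun s : ℝ => κ s * (|t₁ - s| - |t₂ - s|))
          = fun s => κ s * |t₁ - s| - κ s * |t₂ - s| := by funext s; ring
      rw [h]; exact (habs t₁).sub (habs t₂)
    have heq : (∫ s : ℝ, κ s * |t₁ - s|) - (∫ s : ℝ, κ s * |t₂ - s|)
        = ∫ s : ℝ, κ s * (|t₁ - s| - |t₂ - s|) := by
      rw [← integral_sub (habs t₁) (habs t₂)]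
      congr 1; funext s; ring
    rw [heq]
    calc |∫ s : ℝ, κ s * (|t₁ - s| - |t₂ - s|)|
        ≤ ∫ s : ℝ, ‖κ s * (|t₁ - s| - |t₂ - s|)‖ := by
          simpa [Real.norm_eq_abs] using
            norm_integral_le_integral_norm (fun s : ℝ => κ s * (|t₁ - s| - |t₂ - s|))
      _ ≤ ∫ s : ℝ, ‖κ s‖ * |t₁ - t₂| := by
          refine integral_mono hdint.norm (hκint.norm.mul_const _) fun s => ?_
          simp only [Real.norm_eq_abs, norm_mul]
          have h1 : abs (|t₁ - s| - |t₂ - s|) ≤ |t₁ - t₂| := by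
            have := abs_abs_sub_abs_le_abs_sub (t₁ - s) (t₂ - s)
            simpa [show t₁ - s - (t₂ - s) = t₁ - t₂ by ring] using this
          exact mul_le_mul_of_nonneg_left h1 (abs_nonneg _)
      _ = (∫ s : ℝ, ‖κ s‖) * |t₁ - t₂| := integral_mul_const _ _
  have hGeq : ∀ t : ℝ, (∫ s : ℝ, κ s * Real.sign (t - s))
      = 2 * (∫ s in Set.Iic t, κ s) - 1 := by
    intro t
    have hne : ∀ᵐ s : ℝ, s ≠ t := by
      refine ae_iff.2 ?_
      simp only [not_ne_iff, Set.setOf_eq_eq_singleton]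
      exact measure_singleton t
    have h1 : (∫ s in Set.Iic t, κ s * Real.sign (t - s)) = ∫ s in Set.Iic t, κ s := by
      refine setIntegral_congr_ae measurableSet_Iic ?_
      filter_upwards [hne] with s hs hmem
      have hlt : s < t := lt_of_le_of_ne hmem hs
      rw [Real.sign_of_pos (by linarith), mul_one]
    have h2 : (∫ s in Set.Ioi t, κ s * Real.sign (t - s)) = - ∫ s in Set.Ioi t, κ s := by
      rw [← integral_neg]
      refine setIntegral_congr_fun measurableSet_Ioi fun s hs => ?_
      have hlt : t < s := hs
      rw [Real.sign_of_neg (by linarith)]; ring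
    have hsplit := intervalIntegral.integral_Iic_add_Ioi (b := t)
      (hsgn t).integrableOn (hsgn t).integrableOn
    have hsplit2 := intervalIntegral.integral_Iic_add_Ioi (b := t)
      hκint.integrableOn hκint.integrableOn
    rw [hint] at hsplit2
    rw [← hsplit, h1, h2]; linarith
  have hGcont : Continuous (fun t : ℝ => ∫ s : ℝ, κ s * Real.sign (t - s)) := by
    rw [show (fun t : ℝ => ∫ s : ℝ, κ s * Real.sign (t - s))
        = fun t => 2 * (∫ s in Set.Iic t, κ s) - 1 from funext hGeq]
    have hΦ : Continuous (fun t : ℝ => ∫ s in Set.Iic t, κ s) := by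
      have h0 : ∀ t : ℝ, (∫ s in Set.Iic t, κ s)
          = (∫ s in Set.Iic 0, κ s) + ∫ s in (0:ℝ)..t, κ s := by
        intro t
        rw [← intervalIntegral.integral_Iic_sub_Iic hκint.integrableOn hκint.integrableOn]
        ring
      rw [show (fun t : ℝ => ∫ s in Set.Iic t, κ s)
          = fun t => (∫ s in Set.Iic 0, κ s) + ∫ s in (0:ℝ)..t, κ s from funext h0]
      exact continuous_const.add (hκint.continuous_primitive 0)
    exact (continuous_const.mul hΦ).sub continuous_const
  refine ⟨?_, ?_, ?_⟩
  · -- continuity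
    intro a
    rw [show hker (⇑κ) a = fun t => (1 / 2) * |t - a| - (1 / 2) * (∫ s : ℝ, κ s * |t - s|) +
        (a / 2) * ∫ s : ℝ, κ s * Real.sign (t - s) from rfl]
    exact ((continuous_const.mul ((continuous_id.sub continuous_const).abs)).sub
      (continuous_const.mul hFcont)).add (continuous_const.mul hGcont)
  · -- limits
    intro a
    constructor
    · have ht := ((hA_top a).const_mul (1/2 : ℝ)).add (hG_top.const_mul (a/2))
      rw [show (1/2 : ℝ) * (-a) + (a/2) * 1 = 0 by ring] at ht
      exact ht.congr fun t => (hkey a t).symm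
    · have ht := ((hA_bot a).const_mul (1/2 : ℝ)).add (hG_bot.const_mul (a/2))
      rw [show (1/2 : ℝ) * a + (a/2) * (-1) = 0 by ring] at ht
      exact ht.congr fun t => (hkey a t).symm
  · -- uniform bound
    refine ⟨(1/2) * (∫ s : ℝ, ‖κ s‖ * |s|) + (∫ s : ℝ, ‖κ s‖), fun a t => ?_⟩
    have hI0 : (0:ℝ) ≤ ∫ s : ℝ, ‖κ s‖ := integral_nonneg fun s => norm_nonneg _
    have hI1 : (0:ℝ) ≤ ∫ s : ℝ, ‖κ s‖ * |s| :=
      integral_nonneg fun s => mul_nonneg (norm_nonneg _) (abs_nonneg _)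
    have hbint : Integrable (fun s : ℝ => ‖κ s‖ * |s| + ‖κ s‖ * |a|) :=
      hκs.add (hκint.norm.mul_const _)
    have hA : |∫ s : ℝ, κ s * (|t - a| - |t - s|)|
        ≤ (∫ s : ℝ, ‖κ s‖ * |s|) + (∫ s : ℝ, ‖κ s‖) * |a| := by
      calc |∫ s : ℝ, κ s * (|t - a| - |t - s|)|
          ≤ ∫ s : ℝ, ‖κ s * (|t - a| - |t - s|)‖ := by
            simpa [Real.norm_eq_abs] using
              norm_integral_le_integral_norm (fun s : ℝ => κ s * (|t - a| - |t - s|))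
        _ ≤ ∫ s : ℝ, ‖κ s‖ * |s| + ‖κ s‖ * |a| := by
            refine integral_mono (hsub a t).norm hbint fun s => ?_
            simp only [Real.norm_eq_abs, norm_mul]
            have h1 : abs (|t - a| - |t - s|) ≤ |s - a| := by
              have := abs_abs_sub_abs_le_abs_sub (t - a) (t - s)
              simpa [show t - a - (t - s) = s - a by ring] using this
            have h2 : |s - a| ≤ |s| + |a| := abs_sub s a
            calc |κ s| * abs (|t - a| - |t - s|) ≤ |κ s| * (|s| + |a|) :=
                  mul_le_mul_of_nonneg_left (h1.trans h2) (abs_nonneg _)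
              _ = |κ s| * |s| + |κ s| * |a| := by ring
        _ = (∫ s : ℝ, ‖κ s‖ * |s|) + (∫ s : ℝ, ‖κ s‖) * |a| := by
            rw [integral_add hκs (hκint.norm.mul_const _), integral_mul_const]
    have hG : |∫ s : ℝ, κ s * Real.sign (t - s)| ≤ ∫ s : ℝ, ‖κ s‖ := by
      calc |∫ s : ℝ, κ s * Real.sign (t - s)|
          ≤ ∫ s : ℝ, ‖κ s * Real.sign (t - s)‖ := by
            simpa [Real.norm_eq_abs] using
              norm_integral_le_integral_norm (fun s : ℝ => κ s * Real.sign (t - s))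
        _ ≤ ∫ s : ℝ, ‖κ s‖ := by
            refine integral_mono (hsgn t).norm hκint.norm fun s => ?_
            simp only [Real.norm_eq_abs, norm_mul]
            calc |κ s| * |Real.sign (t - s)| ≤ |κ s| * 1 :=
                  mul_le_mul_of_nonneg_left (abs_realSign_le _) (abs_nonneg _)
              _ = |κ s| := mul_one _
    rw [hkey a t]
    calc |(1/2) * (∫ s : ℝ, κ s * (|t - a| - |t - s|))
          + (a/2) * (∫ s : ℝ, κ s * Real.sign (t - s))|
        ≤ |(1/2) * (∫ s : ℝ, κ s * (|t - a| - |t - s|))|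
          + |(a/2) * (∫ s : ℝ, κ s * Real.sign (t - s))| := abs_add_le _ _
      _ = (1/2) * |∫ s : ℝ, κ s * (|t - a| - |t - s|)|
          + (|a|/2) * |∫ s : ℝ, κ s * Real.sign (t - s)| := by
          simp [abs_mul, abs_div]
      _ ≤ (1/2) * ((∫ s : ℝ, ‖κ s‖ * |s|) + (∫ s : ℝ, ‖κ s‖) * |a|)
          + (|a|/2) * (∫ s : ℝ, ‖κ s‖) := by
          gcongr
      _ ≤ ((1/2) * (∫ s : ℝ, ‖κ s‖ * |s|) + (∫ s : ℝ, ‖κ s‖)) * (1 + |a|) := by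
          have ha : (0:ℝ) ≤ |a| := abs_nonneg a
          nlinarith
end
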